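/- Let n ≥ 1. Every elliptic element g of Sp(n,1) (defined by the form J₁), i.e., every g ∈ Sp(n,1) fixing a point of ℍHⁿ, is conjugate within Sp(n,1) to a diagonal matrix diag(λ₁, …, λ_{n+1}) with λᵢ ∈ ℍ and |λᵢ| = 1 for all 1 ≤ i ≤ n+1. -/

import Mathlib

noncomputable section
open Matrix

abbrev Hq : Type := Quaternion ℝ

/-- The diagonal matrix `J₁ = diag(-1, 1, …, 1)` of the Hermitian form. -/
def J1 (n : ℕ) : Matrix (Fin (n+1)) (Fin (n+1)) Hq :=
  Matrix.diagonal fun i => if (i : ℕ) = 0 then -1 else 1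

/-- The value `v* J v` of the Hermitian form on a vector `v`. -/
def qform {n : ℕ} (J : Matrix (Fin n) (Fin n) Hq) (v : Fin n → Hq) : Hq :=
  dotProduct (fun i => star (v i)) (J.mulVec v)

/-- `w` spans the same right quaternionic line as `v`. -/
def SameLine {n : ℕ} (v w : Fin n → Hq) : Prop :=
  ∃ q : Hq, q ≠ 0 ∧ w = fun i => v i * q

/-- `A` fixes the right quaternionic line spanned by `v`, i.e. `A v ∈ v ℍ`. -/
def FixesLine {n : ℕ} (A : Matrix (Fin n) (Fin n) Hq) (v : Fin n → Hq) : Prop :=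
  ∃ q : Hq, A.mulVec v = fun i => v i * q

/-- `A` is loxodromic w.r.t. the Hermitian form `J`: it fixes exactly two points of the
boundary (null lines) and no point of hyperbolic space (negative lines). -/
def IsLoxodromic {n : ℕ} (J A : Matrix (Fin n) (Fin n) Hq) : Prop :=
  (∀ v : Fin n → Hq, v ≠ 0 → (qform J v).re < 0 → ¬ FixesLine A v) ∧
  ∃ v w : Fin n → Hq, v ≠ 0 ∧ w ≠ 0 ∧ (qform J v).re = 0 ∧ (qform J w).re = 0 ∧
    ¬ SameLine v w ∧ FixesLine A v ∧ FixesLine A w ∧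
    ∀ u : Fin n → Hq, u ≠ 0 → (qform J u).re = 0 → FixesLine A u →
      (SameLine u v ∨ SameLine u w)

/-- `Sp(n,1)` (w.r.t. the form `J₁`) as a set of matrices. -/
def SpSet1 (n : ℕ) : Set (Matrix (Fin (n+1)) (Fin (n+1)) Hq) :=
  {A | IsUnit A ∧ Aᴴ * J1 n * A = J1 n}

/-- `A` is elliptic w.r.t. `J₁`: it fixes a point of `ℍHⁿ`, i.e. a negative line. -/
def IsElliptic {n : ℕ} (J A : Matrix (Fin n) (Fin n) Hq) : Prop :=
  ∃ v : Fin n → Hq, v ≠ 0 ∧ (qform J v).re < 0 ∧ FixesLine A v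

namespace Aux
variable {m : ℕ}


/-- complex number as quaternion -/
def cq (c : ℂ) : Hq := ⟨c.re, c.im, 0, 0⟩

lemma cq_mul (c d : ℂ) : cq (c * d) = cq c * cq d := by
  ext <;> simp only [Quaternion.re_mul, Quaternion.imI_mul, Quaternion.imJ_mul,
    Quaternion.imK_mul] <;> simp [cq, Complex.mul_re, Complex.mul_im] <;> ring

lemma cq_add (c d : ℂ) : cq (c + d) = cq c + cq d := by
  ext <;> simp only [Quaternion.re_add, Quaternion.imI_add, Quaternion.imJ_add,
    Quaternion.imK_add] <;> simp [cq]

lemma cq_one : cq 1 = 1 := by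
  ext <;> simp [cq, Quaternion.re_one, Quaternion.imI_one, Quaternion.imJ_one, Quaternion.imK_one]

instance : SMul ℂ Hq := ⟨fun c q => q * cq c⟩

lemma csmul_def (c : ℂ) (q : Hq) : c • q = q * cq c := rfl

instance : Module ℂ Hq where
  one_smul q := by simp [csmul_def, cq_one]
  mul_smul c d q := by
    simp only [csmul_def, ← cq_mul, mul_assoc, mul_comm c d]
  smul_zero c := by simp [csmul_def]
  smul_add c x y := by simp [csmul_def, add_mul]
  add_smul c d q := by simp [csmul_def, cq_add, mul_add]
  zero_smul q := by
    show q * cq 0 = 0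
    have : cq 0 = 0 := by
      ext <;> simp [cq, Quaternion.re_zero, Quaternion.imI_zero, Quaternion.imJ_zero,
        Quaternion.imK_zero]
    simp [this]

/-- the quaternion j -/
def qj : Hq := ⟨0, 0, 1, 0⟩

lemma span_one_qj : (Submodule.span ℂ {(1 : Hq), qj} : Submodule ℂ Hq) = ⊤ := by
  ext q
  simp only [Submodule.mem_top, iff_true, Submodule.mem_span_pair]
  refine ⟨⟨q.re, q.imI⟩, ⟨q.imJ, -q.imK⟩, ?_⟩
  ext <;> simp only [csmul_def, Quaternion.re_add, Quaternion.imI_add, Quaternion.imJ_add,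
    Quaternion.imK_add, Quaternion.re_mul, Quaternion.imI_mul, Quaternion.imJ_mul,
    Quaternion.imK_mul] <;> simp [cq, qj, Quaternion.re_one, Quaternion.imI_one,
    Quaternion.imJ_one, Quaternion.imK_one]

instance : Module.Finite ℂ Hq := by
  rw [Module.finite_def, Submodule.fg_def]
  exact ⟨{1, qj}, (Set.finite_singleton qj).insert 1, span_one_qj⟩

lemma mulVec_smulRight {m : ℕ} (A : Matrix (Fin m) (Fin m) Hq) (x : Fin m → Hq) (s : Hq) :
    A *ᵥ (fun i => x i * s) = fun i => (A *ᵥ x) i * s := by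
  funext i
  simp only [Matrix.mulVec, dotProduct, Finset.sum_mul, mul_assoc]

lemma exists_right_eigenvector {m : ℕ} (hm : 0 < m) (B : Matrix (Fin m) (Fin m) Hq) :
    ∃ (x : Fin m → Hq) (q : Hq), x ≠ 0 ∧ B *ᵥ x = fun i => x i * q := by
  haveI : Nonempty (Fin m) := ⟨⟨0, hm⟩⟩
  let T : Module.End ℂ (Fin m → Hq) :=
    { toFun := fun x => B *ᵥ x
      map_add' := fun x y => Matrix.mulVec_add B x y
      map_smul' := fun c x => by
        show B *ᵥ (fun i => x i * cq c) = fun i => (B *ᵥ x) i * cq c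
        exact mulVec_smulRight B x (cq c) }
  obtain ⟨c, hc⟩ := Module.End.exists_eigenvalue T
  obtain ⟨x, hx⟩ := hc.exists_hasEigenvector
  refine ⟨x, cq c, hx.right, ?_⟩
  have := hx.apply_eq_smul
  exact this



def bform (J : Matrix (Fin m) (Fin m) Hq) (x y : Fin m → Hq) : Hq :=
  star x ⬝ᵥ (J *ᵥ y)

lemma bform_transform (J A : Matrix (Fin m) (Fin m) Hq) (x y : Fin m → Hq) :
    bform J (A *ᵥ x) (A *ᵥ y) = bform (Aᴴ * (J * A)) x y := by
  unfold bform
  rw [star_mulVec, mulVec_mulVec, dotProduct_mulVec, vecMul_vecMul, ← dotProduct_mulVec]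

lemma bform_smul_left (J : Matrix (Fin m) (Fin m) Hq) (x y : Fin m → Hq) (s : Hq) :
    bform J (fun i => x i * s) y = star s * bform J x y := by
  simp only [bform, dotProduct, Pi.star_apply, Finset.mul_sum]
  refine Finset.sum_congr rfl fun i _ => ?_
  rw [StarMul.star_mul, mul_assoc]

lemma bform_smul_right (J : Matrix (Fin m) (Fin m) Hq) (x y : Fin m → Hq) (s : Hq) :
    bform J x (fun i => y i * s) = bform J x y * s := by
  have h : J *ᵥ (fun i => y i * s) = fun i => (J *ᵥ y) i * s := by
    funext i
    simp only [Matrix.mulVec, dotProduct, Finset.sum_mul, mul_assoc]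
  simp only [bform, h, dotProduct, Finset.sum_mul, mul_assoc]

lemma bform_star {J : Matrix (Fin m) (Fin m) Hq} (hJ : Jᴴ = J) (x y : Fin m → Hq) :
    star (bform J x y) = bform J y x := by
  unfold bform
  have h1 : star (star x ⬝ᵥ (J *ᵥ y)) = star (J *ᵥ y) ⬝ᵥ x := by
    rw [star_dotProduct, star_star]
  rw [h1, star_mulVec, hJ, dotProduct_mulVec]

lemma bform_diagonal (f : Fin m → Hq) (x y : Fin m → Hq) :
    bform (Matrix.diagonal f) x y = ∑ i, star (x i) * (f i * y i) := by
  simp [bform, dotProduct, mulVec_diagonal]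

/-- vecMulVec products -/
lemma vecMulVec_mul (a u : Fin m → Hq) (M : Matrix (Fin m) (Fin m) Hq) :
    vecMulVec a u * M = vecMulVec a (u ᵥ* M) := by
  refine Matrix.ext fun i j => ?_
  simp only [Matrix.mul_apply, vecMulVec_apply, vecMul, dotProduct, Finset.mul_sum, mul_assoc]

lemma vecMulVec_mul_vecMulVec (a u b v : Fin m → Hq) (ρ : ℝ) (h : u ⬝ᵥ b = (ρ : Hq)) :
    vecMulVec a u * vecMulVec b v = ρ • vecMulVec a v := by
  refine Matrix.ext fun i j => ?_
  have : (vecMulVec a u * vecMulVec b v) i j = a i * (u ⬝ᵥ b) * v j := by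
    simp only [Matrix.mul_apply, vecMulVec_apply, dotProduct, Finset.mul_sum, Finset.sum_mul,
      mul_assoc]
  rw [this, h, Matrix.smul_apply, vecMulVec_apply, ← Quaternion.coe_mul_eq_smul, ← mul_assoc,
    Quaternion.coe_commutes, mul_assoc]

lemma star_real_smul (c : ℝ) (q : Hq) : star (c • q) = c • (star q) := by
  ext <;> simp

lemma conjTranspose_real_smul (c : ℝ) (M : Matrix (Fin m) (Fin m) Hq) :
    (c • M)ᴴ = c • Mᴴ := by
  refine Matrix.ext fun i j => ?_
  simp only [conjTranspose_apply, Matrix.smul_apply]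
  exact star_real_smul c (M j i)

section House
variable (J : Matrix (Fin m) (Fin m) Hq) (w : Fin m → Hq) (c : ℝ)

def house : Matrix (Fin m) (Fin m) Hq :=
  1 - c • (vecMulVec w (star w) * J)

lemma WJW {J : Matrix (Fin m) (Fin m) Hq} {w : Fin m → Hq} {ρ : ℝ}
    (hw : bform J w w = (ρ : Hq)) :
    vecMulVec w (star w) * J * vecMulVec w (star w) = ρ • (vecMulVec w (star w)) := by
  rw [vecMulVec_mul]
  refine vecMulVec_mul_vecMulVec _ _ _ _ ρ ?_
  rw [← dotProduct_mulVec]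
  exact hw

lemma vecMulVec_star_herm (w : Fin m → Hq) :
    (vecMulVec w (star w))ᴴ = vecMulVec w (star w) := by
  refine Matrix.ext fun i j => ?_
  simp only [conjTranspose_apply, vecMulVec_apply, Pi.star_apply, StarMul.star_mul, star_star]

lemma house_conjTranspose {J : Matrix (Fin m) (Fin m) Hq} (hJ : Jᴴ = J) (w : Fin m → Hq) (c : ℝ) :
    (house J w c)ᴴ = 1 - c • (J * vecMulVec w (star w)) := by
  unfold house
  rw [conjTranspose_sub, conjTranspose_one, conjTranspose_real_smul, conjTranspose_mul, hJ,
    vecMulVec_star_herm]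

lemma house_mul_house {J : Matrix (Fin m) (Fin m) Hq} {w : Fin m → Hq} {c ρ : ℝ}
    (hw : bform J w w = (ρ : Hq)) (hc : c * ρ = 2) :
    house J w c * house J w c = 1 := by
  set W := vecMulVec w (star w) with hWdef
  have key : W * J * W = ρ • W := WJW hw
  unfold house
  rw [Matrix.sub_mul, Matrix.one_mul, Matrix.mul_sub, Matrix.mul_one, Matrix.smul_mul,
    Matrix.mul_smul, smul_smul]
  have assoc : W * J * (W * J) = (W * J * W) * J := by noncomm_ring
  rw [assoc, key, Matrix.smul_mul, smul_smul]
  have hcc : c * c * ρ = c + c := by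
    have h1 : c * c * ρ = (c * ρ) * c := by ring
    rw [h1, hc]; ring
  rw [hcc, add_smul, hWdef]
  abel

lemma house_J_house {J : Matrix (Fin m) (Fin m) Hq} (hJ : Jᴴ = J) {w : Fin m → Hq} {c ρ : ℝ}
    (hw : bform J w w = (ρ : Hq)) (hc : c * ρ = 2) :
    (house J w c)ᴴ * J * house J w c = J := by
  set W := vecMulVec w (star w) with hWdef
  have key : W * J * W = ρ • W := WJW hw
  rw [house_conjTranspose hJ]
  unfold house
  have key2 : ∀ M : Matrix (Fin m) (Fin m) Hq, W * (J * (W * M)) = ρ • (W * M) := fun M => by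
    rw [show W * (J * (W * M)) = (W * J * W) * M by noncomm_ring, key, Matrix.smul_mul]
  have key3 : W * (J * W) = ρ • W := by rw [← Matrix.mul_assoc, key]
  simp only [Matrix.sub_mul, Matrix.mul_sub, Matrix.one_mul, Matrix.mul_one, Matrix.smul_mul,
    Matrix.mul_smul, smul_smul, smul_sub, Matrix.mul_assoc, key2, key3, ← hWdef]
  have hcc : c * (c * ρ) = c + c := by
    have h1 : c * (c * ρ) = (c * ρ) * c := by ring
    rw [h1, hc]; ring
  rw [hcc, add_smul]
  abel

lemma house_mulVec_apply (J : Matrix (Fin m) (Fin m) Hq) (w : Fin m → Hq) (c : ℝ)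
    (x : Fin m → Hq) (i : Fin m) :
    (house J w c *ᵥ x) i = x i - w i * ((c : Hq) * bform J w x) := by
  unfold house
  rw [Matrix.sub_mulVec, Matrix.one_mulVec, Matrix.smul_mulVec, ← mulVec_mulVec]
  have h2 : (vecMulVec w (star w) *ᵥ (J *ᵥ x)) i = w i * bform J w x := by
    simp only [Matrix.mulVec, vecMulVec_apply, dotProduct, bform, Finset.mul_sum, mul_assoc]
  simp only [Pi.sub_apply, Pi.smul_apply, h2, ← Quaternion.coe_mul_eq_smul]
  rw [← mul_assoc, Quaternion.coe_commutes, mul_assoc]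


end House


/-- extend a matrix by a scalar in the top-left corner -/
def dEx (q : Hq) (U : Matrix (Fin m) (Fin m) Hq) : Matrix (Fin (m+1)) (Fin (m+1)) Hq :=
  Matrix.of fun i j =>
    Fin.cases (Fin.cases q (fun _ => 0) j) (fun i' => Fin.cases 0 (fun j' => U i' j') j) i

@[simp] lemma dEx_00 (q : Hq) (U : Matrix (Fin m) (Fin m) Hq) : dEx q U 0 0 = q := rfl
@[simp] lemma dEx_succ_zero (q : Hq) (U : Matrix (Fin m) (Fin m) Hq) (i : Fin m) :
    dEx q U i.succ 0 = 0 := rfl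
@[simp] lemma dEx_zero_succ (q : Hq) (U : Matrix (Fin m) (Fin m) Hq) (j : Fin m) :
    dEx q U 0 j.succ = 0 := rfl
@[simp] lemma dEx_succ_succ (q : Hq) (U : Matrix (Fin m) (Fin m) Hq) (i j : Fin m) :
    dEx q U i.succ j.succ = U i j := rfl

lemma dEx_mul (q r : Hq) (U V : Matrix (Fin m) (Fin m) Hq) :
    dEx q U * dEx r V = dEx (q * r) (U * V) := by
  refine Matrix.ext fun i j => ?_
  rw [Matrix.mul_apply, Fin.sum_univ_succ]
  induction i using Fin.cases with
  | zero =>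
    induction j using Fin.cases with
    | zero => simp
    | succ j' => simp
  | succ i' =>
    induction j using Fin.cases with
    | zero => simp
    | succ j' => simp [Matrix.mul_apply]

lemma dEx_conjTranspose (q : Hq) (U : Matrix (Fin m) (Fin m) Hq) :
    (dEx q U)ᴴ = dEx (star q) Uᴴ := by
  refine Matrix.ext fun i j => ?_
  induction i using Fin.cases with
  | zero =>
    induction j using Fin.cases with
    | zero => simp [conjTranspose_apply]
    | succ j' => simp [conjTranspose_apply]
  | succ i' =>
    induction j using Fin.cases with
    | zero => simp [conjTranspose_apply]
    | succ j' => simp [conjTranspose_apply]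

lemma dEx_one : dEx (1 : Hq) (1 : Matrix (Fin m) (Fin m) Hq) = 1 := by
  refine Matrix.ext fun i j => ?_
  induction i using Fin.cases with
  | zero =>
    induction j using Fin.cases with
    | zero => simp
    | succ j' => simp [Matrix.one_apply, (Fin.succ_ne_zero j').symm]
  | succ i' =>
    induction j using Fin.cases with
    | zero => simp [Matrix.one_apply, Fin.succ_ne_zero i']
    | succ j' => simp [Matrix.one_apply, Fin.succ_inj]

lemma dEx_diagonal (q : Hq) (d : Fin m → Hq) :
    dEx q (Matrix.diagonal d) = Matrix.diagonal (Fin.cons q d) := by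
  refine Matrix.ext fun i j => ?_
  induction i using Fin.cases with
  | zero =>
    induction j using Fin.cases with
    | zero => simp
    | succ j' => simp [Matrix.diagonal_apply, (Fin.succ_ne_zero j').symm]
  | succ i' =>
    induction j using Fin.cases with
    | zero => simp [Matrix.diagonal_apply, Fin.succ_ne_zero i']
    | succ j' =>
      by_cases h : i' = j'
      · subst h; simp
      · simp [Matrix.diagonal_apply, h, Fin.succ_inj]

lemma dEx_submatrix (q : Hq) (U : Matrix (Fin m) (Fin m) Hq) :
    (dEx q U).submatrix Fin.succ Fin.succ = U := rfl

lemma eq_dEx (M : Matrix (Fin (m+1)) (Fin (m+1)) Hq) (q : Hq)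
    (h00 : M 0 0 = q) (hc : ∀ i : Fin m, M i.succ 0 = 0) (hr : ∀ j : Fin m, M 0 j.succ = 0) :
    M = dEx q (M.submatrix Fin.succ Fin.succ) := by
  refine Matrix.ext fun i j => ?_
  induction i using Fin.cases with
  | zero =>
    induction j using Fin.cases with
    | zero => simpa using h00
    | succ j' => simpa using hr j'
  | succ i' =>
    induction j using Fin.cases with
    | zero => simpa using hc i'
    | succ j' => rfl

lemma dEx_inj {q q' : Hq} {U V : Matrix (Fin m) (Fin m) Hq} (h : dEx q U = dEx q' V) :
    q = q' ∧ U = V := by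
  constructor
  · have := congrArg (fun M => M 0 0) h
    simpa using this
  · refine Matrix.ext fun i j => ?_
    have := congrArg (fun M => M i.succ j.succ) h
    simpa using this

end Aux

namespace Aux
variable {m : ℕ}

lemma coe_sum {ι : Type*} (s : Finset ι) (f : ι → ℝ) :
    ((∑ i ∈ s, f i : ℝ) : Hq) = ∑ i ∈ s, ((f i : ℝ) : Hq) := by
  exact map_sum (algebraMap ℝ Hq) f s

lemma bform_one_apply (x y : Fin m → Hq) : bform 1 x y = star x ⬝ᵥ y := by
  simp [bform]

lemma bform_sub_left (J : Matrix (Fin m) (Fin m) Hq) (x y z : Fin m → Hq) :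
    bform J (x - y) z = bform J x z - bform J y z := by
  simp [bform, sub_dotProduct]

lemma bform_sub_right (J : Matrix (Fin m) (Fin m) Hq) (x y z : Fin m → Hq) :
    bform J x (y - z) = bform J x y - bform J x z := by
  simp [bform, mulVec_sub, dotProduct_sub]

lemma star_single_one (j : Fin m) :
    star (Pi.single j (1 : Hq) : Fin m → Hq) = Pi.single j 1 := by
  funext i
  by_cases h : i = j
  · subst h; simp
  · simp [Pi.single_eq_of_ne h]

lemma bform_one_self (x : Fin m → Hq) :
    bform 1 x x = ((∑ i, Quaternion.normSq (x i) : ℝ) : Hq) := by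
  rw [bform_one_apply, coe_sum]
  simp only [dotProduct, Pi.star_apply, Quaternion.star_mul_self]

lemma sum_normSq_pos {x : Fin m → Hq} (hx : x ≠ 0) :
    0 < ∑ i, Quaternion.normSq (x i) := by
  obtain ⟨i, hi⟩ := Function.ne_iff.1 hx
  refine Finset.sum_pos' (fun j _ => Quaternion.normSq_nonneg) ⟨i, Finset.mem_univ i, ?_⟩
  have := Quaternion.normSq_ne_zero.2 hi
  exact lt_of_le_of_ne Quaternion.normSq_nonneg (Ne.symm this)

/-- The spectral theorem for quaternionic unitary matrices. -/
lemma unitary_spectral : ∀ (m : ℕ) (B : Matrix (Fin m) (Fin m) Hq), Bᴴ * B = 1 →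
    ∃ (U : Matrix (Fin m) (Fin m) Hq) (lam : Fin m → Hq),
      Uᴴ * U = 1 ∧ U * Uᴴ = 1 ∧ (∀ i, Quaternion.normSq (lam i) = 1) ∧
      Uᴴ * B * U = Matrix.diagonal lam := by
  intro m
  induction m with
  | zero =>
    intro B _
    exact ⟨1, fun _ => 1, by simp, by simp, fun i => i.elim0,
      Matrix.ext fun i _ => i.elim0⟩
  | succ m IH =>
    intro B hB
    obtain ⟨x, q, hx0, hxq⟩ := exists_right_eigenvector (Nat.succ_pos m) B
    have hpres : ∀ y z, bform 1 (B *ᵥ y) (B *ᵥ z) = bform 1 y z := by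
      intro y z
      rw [bform_transform, Matrix.one_mul, hB]
    set r : ℝ := ∑ i, Quaternion.normSq (x i) with hrdef
    have hr : 0 < r := sum_normSq_pos hx0
    have hxx : bform 1 x x = (r : Hq) := bform_one_self x
    -- eigenvalue has norm 1
    have hq1 : Quaternion.normSq q = 1 := by
      have h1 : bform 1 (B *ᵥ x) (B *ᵥ x) = bform 1 x x := hpres x x
      rw [hxq, bform_smul_left, bform_smul_right, hxx] at h1
      rw [Quaternion.coe_commutes, ← mul_assoc, Quaternion.star_mul_self, ← Quaternion.coe_mul]
        at h1
      have h2 := Quaternion.coe_injective h1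
      have h3 : Quaternion.normSq q * r = 1 * r := by rw [one_mul]; exact h2
      exact mul_right_cancel₀ hr.ne' h3
    -- normalize
    set s : ℝ := (Real.sqrt r)⁻¹ with hsdef
    set u : Fin (m+1) → Hq := fun i => x i * (s : Hq) with hudef
    have hsr : Real.sqrt r ≠ 0 := by positivity
    have huu : bform 1 u u = 1 := by
      rw [hudef]
      rw [bform_smul_left, bform_smul_right, hxx, Quaternion.star_coe, ← Quaternion.coe_mul,
        ← Quaternion.coe_mul]
      have : s * (r * s) = 1 := by
        rw [hsdef]
        rw [← Real.mul_self_sqrt hr.le]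
        field_simp
        rw [Real.sqrt_sq (Real.sqrt_nonneg r)]
      rw [this, Quaternion.coe_one]
    have huq : B *ᵥ u = fun i => u i * q := by
      rw [hudef, mulVec_smulRight, hxq]
      funext i
      simp only
      rw [mul_assoc, ← Quaternion.coe_commutes, ← mul_assoc]
    -- rotate so that the 0 coordinate is real nonnegative
    obtain ⟨φ, t, hφ, ht0, ha0⟩ :
        ∃ (φ : Hq) (t : ℝ), Quaternion.normSq φ = 1 ∧ 0 ≤ t ∧ u 0 * φ = (t : Hq) := by
      by_cases h0 : u 0 = 0
      · exact ⟨1, 0, by simp, le_refl 0, by simp [h0]⟩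
      · set t := Real.sqrt (Quaternion.normSq (u 0)) with htdef
        have ht : 0 < t := Real.sqrt_pos.2
          (lt_of_le_of_ne Quaternion.normSq_nonneg (Ne.symm (Quaternion.normSq_ne_zero.2 h0)))
        have ht2 : t * t = Quaternion.normSq (u 0) :=
          Real.mul_self_sqrt Quaternion.normSq_nonneg
        refine ⟨star (u 0) * ((t⁻¹ : ℝ) : Hq), t, ?_, ht.le, ?_⟩
        · rw [_root_.map_mul, Quaternion.normSq_star, Quaternion.normSq_coe]
          rw [← ht2]
          field_simp
        · rw [← mul_assoc, Quaternion.self_mul_star, ← ht2, ← Quaternion.coe_mul]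
          congr 1
          field_simp
    set a : Fin (m+1) → Hq := fun i => u i * φ with hadef
    have hφφ : φ * star φ = 1 := by
      rw [Quaternion.self_mul_star, hφ, Quaternion.coe_one]
    have hφφ' : star φ * φ = 1 := by
      rw [Quaternion.star_mul_self, hφ, Quaternion.coe_one]
    have haa : bform 1 a a = 1 := by
      rw [hadef, bform_smul_left, bform_smul_right, huu, one_mul, hφφ']
    set lam0 : Hq := star φ * (q * φ) with hlam0def
    have hlam0 : Quaternion.normSq lam0 = 1 := by
      rw [hlam0def, _root_.map_mul, _root_.map_mul, Quaternion.normSq_star, hφ, hq1]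
      ring
    have haq : B *ᵥ a = fun i => a i * lam0 := by
      rw [hadef, mulVec_smulRight, huq]
      funext i
      simp only [hlam0def]
      calc u i * q * φ = u i * ((φ * star φ) * (q * φ)) := by
            rw [hφφ, one_mul, mul_assoc]
        _ = u i * φ * (star φ * (q * φ)) := by
            simp only [mul_assoc]
    have ha0' : a 0 = (t : Hq) := ha0
    have hsumA : ∑ i, Quaternion.normSq (a i) = 1 := by
      have h1 := haa
      rw [bform_one_self a] at h1
      have : ((∑ i, Quaternion.normSq (a i) : ℝ) : Hq) = ((1 : ℝ) : Hq) := by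
        rw [h1, Quaternion.coe_one]
      exact Quaternion.coe_injective this
    have ht1 : t ≤ 1 := by
      have hle : Quaternion.normSq (a 0) ≤ 1 := by
        rw [← hsumA]
        exact Finset.single_le_sum (f := fun j => Quaternion.normSq (a j))
          (fun j _ => Quaternion.normSq_nonneg) (Finset.mem_univ 0)
      rw [ha0', Quaternion.normSq_coe] at hle
      nlinarith
    set e0 : Fin (m+1) → Hq := Pi.single 0 1 with he0def
    -- Householder
    obtain ⟨H, hHsp, hHH, hHe⟩ :
        ∃ H : Matrix (Fin (m+1)) (Fin (m+1)) Hq, Hᴴ * H = 1 ∧ H * H = 1 ∧ H *ᵥ e0 = a := by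
      by_cases hteq : t = 1
      · -- a = e0
        have hA0 : Quaternion.normSq (a 0) = 1 := by rw [ha0', Quaternion.normSq_coe, hteq]; ring
        have hrest : ∀ i : Fin m, a i.succ = 0 := by
          have hsum0 : ∑ i : Fin m, Quaternion.normSq (a i.succ) = 0 := by
            have := hsumA
            rw [Fin.sum_univ_succ, hA0] at this
            linarith
          intro i
          have := (Finset.sum_eq_zero_iff_of_nonneg
            (fun j _ => Quaternion.normSq_nonneg)).1 hsum0 i (Finset.mem_univ i)
          exact Quaternion.normSq_eq_zero.1 this
        have hae : a = e0 := by
          funext i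
          induction i using Fin.cases with
          | zero => rw [ha0', hteq, Quaternion.coe_one, he0def, Pi.single_eq_same]
          | succ i' => rw [hrest i', he0def, Pi.single_eq_of_ne (Fin.succ_ne_zero i')]
        exact ⟨1, by simp, by simp, by rw [Matrix.one_mulVec, hae]⟩
      · have htlt : t < 1 := lt_of_le_of_ne ht1 hteq
        set w : Fin (m+1) → Hq := a - e0 with hwdef
        set ρ : ℝ := 2 - 2*t with hρdef
        have hρpos : 0 < ρ := by rw [hρdef]; linarith
        have hae0 : bform 1 a e0 = (t : Hq) := by
          rw [bform_one_apply, he0def, dotProduct_single, mul_one, Pi.star_apply, ha0',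
            Quaternion.star_coe]
        have he0a : bform 1 e0 a = (t : Hq) := by
          rw [bform_one_apply, he0def, star_single_one, single_dotProduct, one_mul, ha0']
        have he0e0 : bform 1 e0 e0 = 1 := by
          rw [bform_one_apply, he0def, dotProduct_single, mul_one, Pi.star_apply,
            Pi.single_eq_same, star_one]
        have hww : bform 1 w w = (ρ : Hq) := by
          rw [hwdef, bform_sub_left, bform_sub_right, bform_sub_right, haa, hae0, he0a, he0e0,
            hρdef, show (2 - 2*t : ℝ) = 1 - t - (t - 1) by ring]
          push_cast
          ring
        set c : ℝ := 2 / ρ with hcdef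
        have hc : c * ρ = 2 := div_mul_cancel₀ 2 hρpos.ne'
        refine ⟨house 1 w c, ?_, house_mul_house hww hc, ?_⟩
        · have := house_J_house (conjTranspose_one) hww hc
          rwa [Matrix.mul_one] at this
        · funext i
          rw [house_mulVec_apply]
          have hwe0 : bform 1 w e0 = ((t - 1 : ℝ) : Hq) := by
            rw [hwdef, bform_sub_left, hae0, he0e0]
            push_cast
            ring
          rw [hwe0, ← Quaternion.coe_mul]
          have : c * (t - 1) = -1 := by
            rw [hcdef, hρdef]
            field_simp
            ring
          rw [this]
          simp only [hwdef, Pi.sub_apply]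
          have hm1 : ((-1 : ℝ) : Hq) = -1 := by push_cast; ring
          rw [hm1, mul_neg_one, sub_neg_eq_add]
          abel
    have hHherm : Hᴴ = H := by
      calc Hᴴ = Hᴴ * (H * H) := by rw [hHH, Matrix.mul_one]
        _ = (Hᴴ * H) * H := by rw [Matrix.mul_assoc]
        _ = H := by rw [hHsp, Matrix.one_mul]
    set M : Matrix (Fin (m+1)) (Fin (m+1)) Hq := H * B * H with hMdef
    have hMct : Mᴴ = H * Bᴴ * H := by
      rw [hMdef, conjTranspose_mul, conjTranspose_mul, hHherm, Matrix.mul_assoc]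
    have hM1 : Mᴴ * M = 1 := by
      rw [hMct, hMdef]
      calc H * Bᴴ * H * (H * B * H) = H * Bᴴ * ((H * H) * (B * H)) := by noncomm_ring
        _ = 1 := by
          rw [hHH, Matrix.one_mul, Matrix.mul_assoc H Bᴴ (B * H), ← Matrix.mul_assoc Bᴴ B H,
            hB, Matrix.one_mul, hHH]
    have hHa : H *ᵥ a = e0 := by
      rw [← hHe, mulVec_mulVec, hHH, Matrix.one_mulVec]
    have hMe : M *ᵥ e0 = fun i => e0 i * lam0 := by
      rw [hMdef, ← mulVec_mulVec, ← mulVec_mulVec, hHe, haq, mulVec_smulRight, hHa]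
    have hMpres : ∀ y z, bform 1 (M *ᵥ y) (M *ᵥ z) = bform 1 y z := by
      intro y z
      rw [bform_transform, Matrix.one_mul, hM1]
    have hMcol : ∀ i, M i 0 * 1 = e0 i * lam0 := by
      intro i
      have h1 : M *ᵥ Pi.single 0 1 = fun i => M i 0 * 1 := mulVec_single M 0 1
      rw [← he0def, hMe] at h1
      exact (congrFun h1 i).symm
    have hM00 : M 0 0 = lam0 := by
      have := hMcol 0
      rwa [mul_one, he0def, Pi.single_eq_same, one_mul] at this
    have hMi0 : ∀ i : Fin m, M i.succ 0 = 0 := by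
      intro i
      have := hMcol i.succ
      rwa [mul_one, he0def, Pi.single_eq_of_ne (Fin.succ_ne_zero i), zero_mul] at this
    have hlam0ne : lam0 ≠ 0 := by
      intro h
      rw [h, map_zero] at hlam0
      norm_num at hlam0
    have hM0j : ∀ j : Fin m, M 0 j.succ = 0 := by
      intro j
      have h1 := hMpres e0 (Pi.single j.succ 1)
      have hrhs : bform 1 e0 (Pi.single j.succ 1) = 0 := by
        rw [bform_one_apply, dotProduct_single, mul_one, Pi.star_apply, he0def,
          Pi.single_eq_of_ne (Fin.succ_ne_zero j), star_zero]
      have hcolj : M *ᵥ Pi.single j.succ 1 = fun i => M i j.succ * 1 := mulVec_single M _ 1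
      rw [hMe, hrhs, bform_smul_left, hcolj] at h1
      have hmid : bform 1 e0 (fun i => M i j.succ * 1) = M 0 j.succ := by
        rw [bform_one_apply, he0def, star_single_one, single_dotProduct, one_mul, mul_one]
      rw [hmid] at h1
      have := mul_eq_zero.1 h1
      rcases this with h | h
      · exact absurd (star_eq_zero.1 h) hlam0ne
      · exact h
    set B' : Matrix (Fin m) (Fin m) Hq := M.submatrix Fin.succ Fin.succ with hB'def
    have hMdex : M = dEx lam0 B' := eq_dEx M lam0 hM00 hMi0 hM0j
    have hB'1 : B'ᴴ * B' = 1 := by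
      have h1 : dEx (star lam0 * lam0) (B'ᴴ * B') = dEx 1 1 := by
        rw [← dEx_mul, ← dEx_conjTranspose, ← hMdex, hM1, dEx_one]
      exact (dEx_inj h1).2
    obtain ⟨U', lam', hU1, hU2, hnorm', hdiag⟩ := IH B' hB'1
    refine ⟨H * dEx 1 U', Fin.cons lam0 lam', ?_, ?_, ?_, ?_⟩
    · rw [conjTranspose_mul, dEx_conjTranspose, star_one, hHherm]
      calc dEx 1 U'ᴴ * H * (H * dEx 1 U') = dEx 1 U'ᴴ * ((H * H) * dEx 1 U') := by noncomm_ring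
        _ = 1 := by rw [hHH, Matrix.one_mul, dEx_mul, hU1, one_mul, dEx_one]
    · rw [conjTranspose_mul, dEx_conjTranspose, star_one, hHherm]
      calc H * dEx 1 U' * (dEx 1 U'ᴴ * H) = H * ((dEx 1 U' * dEx 1 U'ᴴ) * H) := by noncomm_ring
        _ = 1 := by rw [dEx_mul, hU2, one_mul, dEx_one, Matrix.one_mul, hHH]
    · intro i
      induction i using Fin.cases with
      | zero => simpa using hlam0
      | succ i' => simpa using hnorm' i'
    · rw [conjTranspose_mul, dEx_conjTranspose, star_one, hHherm]
      calc dEx 1 U'ᴴ * H * B * (H * dEx 1 U')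
          = dEx 1 U'ᴴ * ((H * B * H) * dEx 1 U') := by noncomm_ring
        _ = dEx 1 U'ᴴ * (dEx lam0 B' * dEx 1 U') := by rw [← hMdef, hMdex]
        _ = dEx (1 * (lam0 * 1)) (U'ᴴ * (B' * U')) := by rw [dEx_mul, dEx_mul]
        _ = dEx lam0 (U'ᴴ * B' * U') := by rw [one_mul, mul_one, Matrix.mul_assoc]
        _ = Matrix.diagonal (Fin.cons lam0 lam') := by rw [hdiag, dEx_diagonal]

end Aux

namespace Aux

lemma norm_one_of_normSq {a : Hq} (h : Quaternion.normSq a = 1) : ‖a‖ = 1 := by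
  have h1 : ‖a‖ * ‖a‖ = 1 := by rw [← Quaternion.normSq_eq_norm_mul_self, h]
  rcases mul_self_eq_one_iff.1 h1 with h2 | h2
  · exact h2
  · nlinarith [norm_nonneg a]

lemma ne_zero_of_normSq_one {a : Hq} (h : Quaternion.normSq a = 1) : a ≠ 0 := by
  intro h0
  rw [h0, map_zero] at h
  norm_num at h

lemma bform_diag_single_right {m : ℕ} (f : Fin m → Hq) (x : Fin m → Hq) (j : Fin m) :
    bform (Matrix.diagonal f) x (Pi.single j 1) = star (x j) * f j := by
  rw [bform_diagonal, Finset.sum_eq_single j]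
  · rw [Pi.single_eq_same, mul_one]
  · intro i _ hne
    rw [Pi.single_eq_of_ne hne, mul_zero, mul_zero]
  · intro h; exact absurd (Finset.mem_univ j) h

lemma bform_diag_single_left {m : ℕ} (f : Fin m → Hq) (y : Fin m → Hq) (j : Fin m) :
    bform (Matrix.diagonal f) (Pi.single j 1) y = f j * y j := by
  rw [bform_diagonal, Finset.sum_eq_single j]
  · rw [Pi.single_eq_same, star_one, one_mul]
  · intro i _ hne
    rw [Pi.single_eq_of_ne hne, star_zero, zero_mul]
  · intro h; exact absurd (Finset.mem_univ j) h

lemma sp_mul {m : ℕ} {J A B : Matrix (Fin m) (Fin m) Hq}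
    (hA : Aᴴ * J * A = J) (hB : Bᴴ * J * B = J) : (A * B)ᴴ * J * (A * B) = J := by
  rw [conjTranspose_mul]
  calc Bᴴ * Aᴴ * J * (A * B) = Bᴴ * (Aᴴ * J * A) * B := by noncomm_ring
    _ = Bᴴ * J * B := by rw [hA]
    _ = J := hB

end Aux

namespace AuxMain
open Aux

variable {n : ℕ}

def J1' (n : ℕ) : Matrix (Fin (n+1)) (Fin (n+1)) Hq :=
  Matrix.diagonal fun i => if (i : ℕ) = 0 then -1 else 1

lemma J1'_herm : (J1' n)ᴴ = J1' n := by
  rw [J1', Matrix.diagonal_conjTranspose]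
  refine congrArg Matrix.diagonal ?_
  funext i
  rw [Pi.star_apply]
  by_cases h : (i : ℕ) = 0 <;> simp [h]

lemma J1'_dEx : J1' n = dEx (-1) (1 : Matrix (Fin n) (Fin n) Hq) := by
  rw [show (1 : Matrix (Fin n) (Fin n) Hq) = Matrix.diagonal (fun _ => 1) from
    (Matrix.diagonal_one).symm, dEx_diagonal]
  rw [J1']
  refine congrArg Matrix.diagonal ?_
  funext i
  induction i using Fin.cases with
  | zero => rw [Fin.cons_zero]; norm_num
  | succ i' => rw [Fin.cons_succ]; simp [Fin.val_succ]

lemma bform_J1' (x : Fin (n+1) → Hq) :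
    bform (J1' n) x x =
      ((- Quaternion.normSq (x 0) + ∑ i : Fin n, Quaternion.normSq (x i.succ) : ℝ) : Hq) := by
  rw [J1', bform_diagonal, Fin.sum_univ_succ]
  have h0 : star (x 0) * ((if ((0 : Fin (n+1)) : ℕ) = 0 then (-1 : Hq) else 1) * x 0)
      = -((Quaternion.normSq (x 0) : ℝ) : Hq) := by
    simp [Quaternion.star_mul_self]
  have hs : ∀ i : Fin n, star (x i.succ) *
      ((if ((i.succ : Fin (n+1)) : ℕ) = 0 then (-1 : Hq) else 1) * x i.succ)
      = ((Quaternion.normSq (x i.succ) : ℝ) : Hq) := by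
    intro i
    simp [Fin.val_succ, Quaternion.star_mul_self]
  rw [h0]
  rw [Finset.sum_congr rfl (fun i _ => hs i)]
  push_cast [coe_sum]
  ring

set_option maxHeartbeats 1600000 in
theorem main (n : ℕ)
    (g : Matrix (Fin (n+1)) (Fin (n+1)) Hq)
    (hgU : IsUnit g) (hgJ : gᴴ * J1' n * g = J1' n)
    (v : Fin (n+1) → Hq) (hv0 : v ≠ 0) (hvneg : (bform (J1' n) v v).re < 0)
    (q : Hq) (hq : g *ᵥ v = fun i => v i * q) :
    ∃ (C Ci : Matrix (Fin (n+1)) (Fin (n+1)) Hq) (lam : Fin (n+1) → Hq),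
      (IsUnit C ∧ Cᴴ * J1' n * C = J1' n) ∧ C * Ci = 1 ∧ Ci * C = 1 ∧
      (∀ i, ‖lam i‖ = 1) ∧ C * g * Ci = Matrix.diagonal lam := by
  have hJh : (J1' n)ᴴ = J1' n := J1'_herm
  have hgpres : ∀ y z, bform (J1' n) (g *ᵥ y) (g *ᵥ z) = bform (J1' n) y z := by
    intro y z
    rw [bform_transform]
    congr 1
    rw [← Matrix.mul_assoc, hgJ]
  -- the form value is a negative real number
  have hreal : bform (J1' n) v v = (((bform (J1' n) v v).re : ℝ) : Hq) := by
    have := bform_star hJh v v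
    exact Quaternion.star_eq_self.1 this
  set r0 : ℝ := (bform (J1' n) v v).re with hr0def
  have hr0 : r0 < 0 := hvneg
  have hvv : bform (J1' n) v v = (r0 : Hq) := hreal
  -- normalize
  set s : ℝ := (Real.sqrt (-r0))⁻¹ with hsdef
  have hsr : Real.sqrt (-r0) ≠ 0 := by
    have h1 : (0:ℝ) < -r0 := by linarith
    exact ne_of_gt (Real.sqrt_pos.2 h1)
  set v' : Fin (n+1) → Hq := fun i => v i * (s : Hq) with hv'def
  have hv'v' : bform (J1' n) v' v' = ((-1 : ℝ) : Hq) := by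
    rw [hv'def, bform_smul_left, bform_smul_right, hvv, Quaternion.star_coe,
      ← Quaternion.coe_mul, ← Quaternion.coe_mul]
    congr 1
    have hss : Real.sqrt (-r0) ^ 2 = -r0 := Real.sq_sqrt (by linarith)
    rw [hsdef]
    field_simp
    linarith
  have hv'q : g *ᵥ v' = fun i => v' i * q := by
    rw [hv'def, mulVec_smulRight, hq]
    funext i
    simp only
    rw [mul_assoc, ← Quaternion.coe_commutes, ← mul_assoc]
  -- coordinate zero dominates
  have hv'0sq : Quaternion.normSq (v' 0)
      = 1 + ∑ i : Fin n, Quaternion.normSq (v' i.succ) := by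
    have h1 := hv'v'
    rw [bform_J1' v'] at h1
    have h2 := Quaternion.coe_injective h1
    linarith [h2]
  have hv'0 : v' 0 ≠ 0 := by
    intro h
    rw [h, map_zero] at hv'0sq
    have : (0:ℝ) ≤ ∑ i : Fin n, Quaternion.normSq (v' i.succ) :=
      Finset.sum_nonneg fun i _ => Quaternion.normSq_nonneg
    linarith
  set t : ℝ := Real.sqrt (Quaternion.normSq (v' 0)) with htdef
  have ht2 : t * t = Quaternion.normSq (v' 0) := Real.mul_self_sqrt Quaternion.normSq_nonneg
  have ht1 : 1 ≤ t := by
    have hsum : (0:ℝ) ≤ ∑ i : Fin n, Quaternion.normSq (v' i.succ) :=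
      Finset.sum_nonneg fun i _ => Quaternion.normSq_nonneg
    nlinarith [Real.sqrt_nonneg (Quaternion.normSq (v' 0))]
  have ht0 : 0 < t := by linarith
  -- rotate
  set φ : Hq := star (v' 0) * ((t⁻¹ : ℝ) : Hq) with hφdef
  have hφ : Quaternion.normSq φ = 1 := by
    rw [hφdef, _root_.map_mul, Quaternion.normSq_star, Quaternion.normSq_coe, ← ht2]
    field_simp
  have hφφ : φ * star φ = 1 := by rw [Quaternion.self_mul_star, hφ, Quaternion.coe_one]
  have hφφ' : star φ * φ = 1 := by rw [Quaternion.star_mul_self, hφ, Quaternion.coe_one]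
  set a : Fin (n+1) → Hq := fun i => v' i * φ with hadef
  have ha0 : a 0 = (t : Hq) := by
    rw [hadef]
    simp only
    rw [hφdef, ← mul_assoc, Quaternion.self_mul_star, ← ht2, ← Quaternion.coe_mul]
    congr 1
    field_simp
  have haa : bform (J1' n) a a = ((-1 : ℝ) : Hq) := by
    rw [hadef, bform_smul_left, bform_smul_right, hv'v']
    have hm1 : ((-1 : ℝ) : Hq) = -1 := by push_cast; ring
    rw [hm1, neg_one_mul, mul_neg, hφφ']
  set μ : Hq := star φ * (q * φ) with hμdef
  have haq : g *ᵥ a = fun i => a i * μ := by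
    rw [hadef, mulVec_smulRight, hv'q]
    funext i
    simp only [hμdef]
    calc v' i * q * φ = v' i * ((φ * star φ) * (q * φ)) := by
          rw [hφφ, one_mul, mul_assoc]
      _ = v' i * φ * (star φ * (q * φ)) := by simp only [mul_assoc]
  set e0 : Fin (n+1) → Hq := Pi.single 0 1 with he0def
  -- values of the form on a, e0
  have hae0 : bform (J1' n) a e0 = -(t : Hq) := by
    rw [he0def, J1', bform_diag_single_right, ha0, Quaternion.star_coe]
    simp
  have he0a : bform (J1' n) e0 a = -(t : Hq) := by
    rw [he0def, J1', bform_diag_single_left, ha0]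
    simp
  have he0e0 : bform (J1' n) e0 e0 = -1 := by
    rw [he0def, J1', bform_diag_single_right]
    simp
  -- Lorentz Householder
  obtain ⟨H, hHsp, hHH, hHe⟩ :
      ∃ H : Matrix (Fin (n+1)) (Fin (n+1)) Hq,
        Hᴴ * J1' n * H = J1' n ∧ H * H = 1 ∧ H *ᵥ e0 = a := by
    by_cases hteq : t = 1
    · -- a = e0
      have hsum0 : ∑ i : Fin n, Quaternion.normSq (a i.succ) = 0 := by
        have h1 := haa
        rw [bform_J1' a] at h1
        have h2 := Quaternion.coe_injective h1
        have hA0 : Quaternion.normSq (a 0) = 1 := by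
          rw [ha0, Quaternion.normSq_coe, hteq]; ring
        rw [hA0] at h2
        linarith
      have hrest : ∀ i : Fin n, a i.succ = 0 := by
        intro i
        have := (Finset.sum_eq_zero_iff_of_nonneg
          (fun j _ => Quaternion.normSq_nonneg)).1 hsum0 i (Finset.mem_univ i)
        exact Quaternion.normSq_eq_zero.1 this
      have hae : a = e0 := by
        funext i
        induction i using Fin.cases with
        | zero => rw [ha0, hteq, Quaternion.coe_one, he0def, Pi.single_eq_same]
        | succ i' => rw [hrest i', he0def, Pi.single_eq_of_ne (Fin.succ_ne_zero i')]
      refine ⟨1, by simp, by simp, by rw [Matrix.one_mulVec, hae]⟩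
    · have htgt : 1 < t := lt_of_le_of_ne ht1 (Ne.symm hteq)
      set w : Fin (n+1) → Hq := a - e0 with hwdef
      set ρ : ℝ := 2*t - 2 with hρdef
      have hρpos : 0 < ρ := by rw [hρdef]; linarith
      have hww : bform (J1' n) w w = (ρ : Hq) := by
        rw [hwdef, bform_sub_left, bform_sub_right, bform_sub_right, haa, hae0, he0a, he0e0,
          hρdef, show (2*t - 2 : ℝ) = -1 - (-t) - (-t - -1) by ring]
        push_cast
        abel
      set c : ℝ := 2 / ρ with hcdef
      have hc : c * ρ = 2 := div_mul_cancel₀ 2 hρpos.ne'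
      refine ⟨house (J1' n) w c, house_J_house hJh hww hc, house_mul_house hww hc, ?_⟩
      funext i
      rw [house_mulVec_apply]
      have hwe0 : bform (J1' n) w e0 = ((1 - t : ℝ) : Hq) := by
        rw [hwdef, bform_sub_left, hae0, he0e0]
        push_cast
        abel
      rw [hwe0, ← Quaternion.coe_mul]
      have hct : c * (1 - t) = -1 := by
        rw [hcdef, hρdef]
        field_simp
        ring
      rw [hct]
      have hm1 : ((-1 : ℝ) : Hq) = -1 := by push_cast; ring
      rw [hm1, mul_neg_one, sub_neg_eq_add]
      simp only [hwdef, Pi.sub_apply]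
      abel
  -- conjugate g
  set h : Matrix (Fin (n+1)) (Fin (n+1)) Hq := H * g * H with hhdef
  have hhJ : hᴴ * J1' n * h = J1' n := sp_mul (sp_mul hHsp hgJ) hHsp
  have hHa : H *ᵥ a = e0 := by rw [← hHe, mulVec_mulVec, hHH, Matrix.one_mulVec]
  have hhe : h *ᵥ e0 = fun i => e0 i * μ := by
    rw [hhdef, ← mulVec_mulVec, ← mulVec_mulVec, hHe, haq, mulVec_smulRight, hHa]
  have hhpres : ∀ y z, bform (J1' n) (h *ᵥ y) (h *ᵥ z) = bform (J1' n) y z := by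
    intro y z
    rw [bform_transform]
    congr 1
    rw [← Matrix.mul_assoc, hhJ]
  have hμ1 : Quaternion.normSq μ = 1 := by
    have h1 := hhpres e0 e0
    rw [hhe, he0e0, bform_smul_left, bform_smul_right, he0e0] at h1
    rw [show (-1 : Hq) * μ = μ * (-1) from by rw [neg_one_mul, mul_neg_one], ← mul_assoc,
      Quaternion.star_mul_self] at h1
    have h2 : ((Quaternion.normSq μ : ℝ) : Hq) = ((1:ℝ) : Hq) := by
      have h3 := congrArg Neg.neg h1
      simpa using h3
    exact Quaternion.coe_injective h2
  have hμne : μ ≠ 0 := ne_zero_of_normSq_one hμ1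
  -- entries of h
  have hcol : ∀ i, h i 0 * 1 = e0 i * μ := by
    intro i
    have h1 : h *ᵥ Pi.single 0 1 = fun i => h i 0 * 1 := mulVec_single h 0 1
    rw [← he0def, hhe] at h1
    exact (congrFun h1 i).symm
  have h00 : h 0 0 = μ := by
    have := hcol 0
    rwa [mul_one, he0def, Pi.single_eq_same, one_mul] at this
  have hi0 : ∀ i : Fin n, h i.succ 0 = 0 := by
    intro i
    have := hcol i.succ
    rwa [mul_one, he0def, Pi.single_eq_of_ne (Fin.succ_ne_zero i), zero_mul] at this
  have h0j : ∀ j : Fin n, h 0 j.succ = 0 := by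
    intro j
    have h1 := hhpres e0 (Pi.single j.succ 1)
    have hrhs : bform (J1' n) e0 (Pi.single j.succ 1) = 0 := by
      rw [he0def, J1', bform_diag_single_right, Pi.single_eq_of_ne (Fin.succ_ne_zero j),
        star_zero, zero_mul]
    have hcolj : h *ᵥ Pi.single j.succ 1 = fun i => h i j.succ * 1 := mulVec_single h _ 1
    rw [hhe, hrhs, bform_smul_left, hcolj] at h1
    have hmid : bform (J1' n) e0 (fun i => h i j.succ * 1)
        = -(h 0 j.succ) := by
      rw [he0def, J1', bform_diag_single_left]
      simp
    rw [hmid] at h1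
    rcases mul_eq_zero.1 h1 with h2 | h2
    · exact absurd (star_eq_zero.1 h2) hμne
    · exact neg_eq_zero.1 h2
  set B : Matrix (Fin n) (Fin n) Hq := h.submatrix Fin.succ Fin.succ with hBdef
  have hdex : h = dEx μ B := eq_dEx h μ h00 hi0 h0j
  have hB1 : Bᴴ * B = 1 := by
    have h1 : dEx ((star μ * -1) * μ) ((Bᴴ * 1) * B) = dEx (-1) 1 := by
      rw [← dEx_mul, ← dEx_mul, ← dEx_conjTranspose, ← hdex, ← J1'_dEx, hhJ, J1'_dEx]
    have h2 := (dEx_inj h1).2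
    rwa [Matrix.mul_one] at h2
  obtain ⟨U', lam', hU1, hU2, hnorm', hdiag⟩ := unitary_spectral n B hB1
  set W : Matrix (Fin (n+1)) (Fin (n+1)) Hq := dEx 1 U' with hWdef
  have hWct : Wᴴ = dEx 1 U'ᴴ := by rw [hWdef, dEx_conjTranspose, star_one]
  refine ⟨Wᴴ * H, H * W, Fin.cons μ lam', ⟨?_, ?_⟩, ?_, ?_, ?_, ?_⟩
  · -- IsUnit
    have hWW : Wᴴ * H * (H * W) = 1 := by
      calc Wᴴ * H * (H * W) = Wᴴ * ((H * H) * W) := by noncomm_ring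
        _ = Wᴴ * W := by rw [hHH, Matrix.one_mul]
        _ = 1 := by rw [hWct, hWdef, dEx_mul, hU1, one_mul, dEx_one]
    have hWW2 : H * W * (Wᴴ * H) = 1 := by
      calc H * W * (Wᴴ * H) = H * ((W * Wᴴ) * H) := by noncomm_ring
        _ = H * H := by rw [hWct, hWdef, dEx_mul, hU2, one_mul, dEx_one, Matrix.one_mul]
        _ = 1 := hHH
    exact ⟨⟨Wᴴ * H, H * W, hWW, hWW2⟩, rfl⟩
  · -- in Sp
    have hWsp : (Wᴴ)ᴴ * J1' n * Wᴴ = J1' n := by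
      rw [conjTranspose_conjTranspose, hWct, hWdef, J1'_dEx, dEx_mul, dEx_mul]
      rw [show ((1:Hq) * -1) * 1 = -1 from by rw [one_mul, mul_one], Matrix.mul_one, hU2]
    exact sp_mul hWsp hHsp
  · calc Wᴴ * H * (H * W) = Wᴴ * ((H * H) * W) := by noncomm_ring
      _ = Wᴴ * W := by rw [hHH, Matrix.one_mul]
      _ = 1 := by rw [hWct, hWdef, dEx_mul, hU1, one_mul, dEx_one]
  · calc H * W * (Wᴴ * H) = H * ((W * Wᴴ) * H) := by noncomm_ring
      _ = H * H := by rw [hWct, hWdef, dEx_mul, hU2, one_mul, dEx_one, Matrix.one_mul]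
      _ = 1 := hHH
  · intro i
    induction i using Fin.cases with
    | zero => simpa using norm_one_of_normSq hμ1
    | succ i' => simpa using norm_one_of_normSq (hnorm' i')
  · calc Wᴴ * H * g * (H * W) = Wᴴ * ((H * g * H) * W) := by noncomm_ring
      _ = Wᴴ * (dEx μ B * W) := by rw [← hhdef, hdex]
      _ = dEx (1 * (μ * 1)) (U'ᴴ * (B * U')) := by
          rw [hWct, hWdef, dEx_mul, dEx_mul]
      _ = dEx μ (U'ᴴ * B * U') := by rw [one_mul, mul_one, Matrix.mul_assoc]
      _ = Matrix.diagonal (Fin.cons μ lam') := by rw [hdiag, dEx_diagonal]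

end AuxMain

theorem stmt10 (n : ℕ) (hn : 1 ≤ n)
    (g : Matrix (Fin (n+1)) (Fin (n+1)) Hq) (hg : g ∈ SpSet1 n)
    (hell : IsElliptic (J1 n) g) :
    ∃ (C Ci : Matrix (Fin (n+1)) (Fin (n+1)) Hq) (lam : Fin (n+1) → Hq),
      C ∈ SpSet1 n ∧ C * Ci = 1 ∧ Ci * C = 1 ∧ (∀ i, ‖lam i‖ = 1) ∧
      C * g * Ci = Matrix.diagonal lam := by
  obtain ⟨hgU, hgJ⟩ := hg
  obtain ⟨v, hv0, hvneg, q, hq⟩ := hell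
  obtain ⟨C, Ci, lam, ⟨hCU, hCsp⟩, h1, h2, h3, h4⟩ :=
    AuxMain.main n g hgU hgJ v hv0 hvneg q hq
  exact ⟨C, Ci, lam, ⟨hCU, hCsp⟩, h1, h2, h3, h4⟩
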